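/- Under the hypotheses of the previous setting but with 0 < ε < ω (ε-systolic expansion of D_1, ω-bounded γ_1), for every w ∈ (L' \ {0}) + im ∂^C_2 and every u ∈ D_1 \ ker ∂^D_1: ‖w + (γ_1 + ∂^D_1)u‖ ≥ (ε/ω) · d_X(C). Hence d_X(tot E) ≥ min(1, ε/ω) · d_X(C) in general. -/

import Mathlib

open Matrix
open scoped ENNReal NNReal

private lemma hn_tri {n : ℕ} (a b : Fin n → ZMod 2) :
    hammingNorm (a + b) ≤ hammingNorm a + hammingNorm b := by
  have := hammingDist_triangle (-a) 0 b
  simpa [hammingDist_eq_hammingNorm] using this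

/- char-2 scalar facts, proved by `decide`, lifted to vectors pointwise. -/
private lemma sc1 : ∀ w a b : ZMod 2, w + b = w + a + (a + b) := by decide

private lemma sc2 : ∀ L db gz dx : ZMod 2, L + db + gz = dx → L = gz + (db + dx) := by decide

private lemma sc3 : ∀ p gu L gz db : ZMod 2, p + gu + L = gz + db → p = L + db + (gu + gz) := by
  decide

private lemma sc4 : ∀ L db gu gz p dx : ZMod 2, p = L + db + (gu + gz) → dx = p →
    L = gu + gz + (dx + db) := by decide

private lemma sc5 : ∀ db gu gz dx : ZMod 2, db + gz = dx → (0 : ZMod 2) + db + gu =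
    gu + gz + dx := by decide

/-- Key inequality: if `w` is a cycle whose class is not killed by adding boundaries
and images of `D`-cycles, then for any `u` with `∂u ≠ 0` we get the bound. -/
private lemma key_ineq (d1 d0 c2 c1 c0 : ℕ) (ε ω : NNReal)
    (dD1 : Matrix (Fin d0) (Fin d1) (ZMod 2))
    (dC2 : Matrix (Fin c1) (Fin c2) (ZMod 2)) (dC1 : Matrix (Fin c0) (Fin c1) (ZMod 2))
    (γ1 : Matrix (Fin c1) (Fin d1) (ZMod 2)) (γ0 : Matrix (Fin c0) (Fin d0) (ZMod 2))
    (hγ0 : γ0 * dD1 = dC1 * γ1)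
    (hbγ1 : ∀ x, (hammingNorm (γ1.mulVec x) : NNReal) ≤ ω * hammingNorm x)
    (hexp : ∀ u : Fin d1 → ZMod 2, dD1.mulVec u ≠ 0 →
        ε * ((sInf {k : ℕ | ∃ z, dD1.mulVec z = 0 ∧ hammingNorm (u + z) = k} : ℕ) : NNReal) ≤
          (hammingNorm (dD1.mulVec u) : NNReal))
    (hε : 0 < ε) (hεω : ε < ω)
    (w : Fin c1 → ZMod 2) (u : Fin d1 → ZMod 2) (hu : dD1.mulVec u ≠ 0)
    (hw : dC1.mulVec w = 0)
    (hnt : ∀ z x, dD1.mulVec z = 0 → w + γ1.mulVec z ≠ dC2.mulVec x) :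
    ((ε / ω : NNReal) : ℝ≥0∞) *
        sInf ((fun v => (hammingNorm v : ℝ≥0∞)) ''
          {v : Fin c1 → ZMod 2 | dC1.mulVec v = 0 ∧
            ¬∃ x : Fin c2 → ZMod 2, dC2.mulVec x = v}) ≤
      ((hammingNorm (dD1.mulVec u) + hammingNorm (w + γ1.mulVec u) : ℕ) : ℝ≥0∞) := by
  have hω : (0 : NNReal) < ω := lt_trans hε hεω
  -- the minimizing z
  set S : Set ℕ := {k : ℕ | ∃ z, dD1.mulVec z = 0 ∧ hammingNorm (u + z) = k} with hS
  have hSne : S.Nonempty := ⟨hammingNorm u, 0, by simp⟩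
  obtain ⟨z, hz0, hzk⟩ := Nat.sInf_mem hSne
  have hεk : ε * ((sInf S : ℕ) : NNReal) ≤ (hammingNorm (dD1.mulVec u) : NNReal) := hexp u hu
  -- the cycle v
  set v : Fin c1 → ZMod 2 := w + γ1.mulVec z with hv
  have hvcyc : dC1.mulVec v = 0 := by
    have h1 : dC1.mulVec (γ1.mulVec z) = 0 := by
      rw [Matrix.mulVec_mulVec, ← hγ0, ← Matrix.mulVec_mulVec, hz0, Matrix.mulVec_zero]
    rw [hv, Matrix.mulVec_add, hw, h1, add_zero]
  have hvnt : ¬∃ x : Fin c2 → ZMod 2, dC2.mulVec x = v := by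
    rintro ⟨x, hx⟩
    exact hnt z x hz0 hx.symm
  have hmem : (hammingNorm v : ℝ≥0∞) ∈ (fun v => (hammingNorm v : ℝ≥0∞)) ''
      {v : Fin c1 → ZMod 2 | dC1.mulVec v = 0 ∧ ¬∃ x : Fin c2 → ZMod 2, dC2.mulVec x = v} :=
    ⟨v, ⟨hvcyc, hvnt⟩, rfl⟩
  have h1 : sInf ((fun v => (hammingNorm v : ℝ≥0∞)) ''
      {v : Fin c1 → ZMod 2 | dC1.mulVec v = 0 ∧ ¬∃ x : Fin c2 → ZMod 2, dC2.mulVec x = v}) ≤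
      (hammingNorm v : ℝ≥0∞) := sInf_le hmem
  -- decomposition of v
  have hdecomp : v = (w + γ1.mulVec u) + γ1.mulVec (u + z) := by
    rw [hv, Matrix.mulVec_add]
    ext i
    simp only [Pi.add_apply]
    exact sc1 (w i) ((γ1.mulVec u) i) ((γ1.mulVec z) i)
  have htri : (hammingNorm v : NNReal) ≤
      (hammingNorm (w + γ1.mulVec u) : NNReal) + hammingNorm (γ1.mulVec (u + z)) := by
    rw [hdecomp]
    exact_mod_cast hn_tri (w + γ1.mulVec u) (γ1.mulVec (u + z))
  have hb : (hammingNorm (γ1.mulVec (u + z)) : NNReal) ≤ ω * ((sInf S : ℕ) : NNReal) := by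
    have := hbγ1 (u + z)
    rwa [hzk] at this
  set A : NNReal := (hammingNorm (w + γ1.mulVec u) : NNReal) with hA
  set B : NNReal := (hammingNorm (γ1.mulVec (u + z)) : NNReal) with hB
  set N : NNReal := (hammingNorm (dD1.mulVec u) : NNReal) with hN
  have hmain : ε * (hammingNorm v : NNReal) ≤ ω * (N + A) := by
    calc ε * (hammingNorm v : NNReal)
        ≤ ε * (A + B) := mul_le_mul_right htri ε
      _ = ε * A + ε * B := mul_add _ _ _
      _ ≤ ω * A + ε * (ω * ((sInf S : ℕ) : NNReal)) :=
          add_le_add (mul_le_mul_left hεω.le A) (mul_le_mul_right hb ε)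
      _ = ω * A + ω * (ε * ((sInf S : ℕ) : NNReal)) := by ring
      _ ≤ ω * A + ω * N := add_le_add_right (mul_le_mul_right hεk ω) _
      _ = ω * (N + A) := by ring
  have hdiv : (ε / ω : NNReal) * (hammingNorm v : NNReal) ≤ N + A := by
    rw [div_mul_eq_mul_div, div_le_iff₀ hω]
    calc ε * (hammingNorm v : NNReal) ≤ ω * (N + A) := hmain
      _ = (N + A) * ω := mul_comm _ _
  calc ((ε / ω : NNReal) : ℝ≥0∞) *
        sInf ((fun v => (hammingNorm v : ℝ≥0∞)) ''
          {v : Fin c1 → ZMod 2 | dC1.mulVec v = 0 ∧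
            ¬∃ x : Fin c2 → ZMod 2, dC2.mulVec x = v})
      ≤ ((ε / ω : NNReal) : ℝ≥0∞) * (hammingNorm v : ℝ≥0∞) := mul_le_mul_right h1 _
    _ ≤ ((hammingNorm (dD1.mulVec u) + hammingNorm (w + γ1.mulVec u) : ℕ) : ℝ≥0∞) := by
        rw [show ((ε / ω : NNReal) : ℝ≥0∞) * (hammingNorm v : ℝ≥0∞) =
            (((ε / ω : NNReal) * (hammingNorm v : NNReal) : NNReal) : ℝ≥0∞) by push_cast; ring]
        rw [show ((hammingNorm (dD1.mulVec u) + hammingNorm (w + γ1.mulVec u) : ℕ) : ℝ≥0∞) =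
            ((N + A : NNReal) : ℝ≥0∞) by rw [hN, hA]; push_cast; ring]
        exact_mod_cast hdiv

/-- Distance bound for fast surgery in the regime `0 < ε < ω`: for every
`w ∈ (L' \ {0}) + im ∂^C₂` and every `u ∈ D₁ \ ker ∂^D₁`,
`‖w + (γ₁ + ∂^D₁)u‖ ≥ (ε/ω) · d_X(C)`; hence
`d_X(tot E) ≥ min(1, ε/ω) · d_X(C)`. -/
theorem stmt8 (d1 d0 c2 c1 c0 : ℕ) (ε ω : NNReal)
    (dD1 : Matrix (Fin d0) (Fin d1) (ZMod 2))
    (dC2 : Matrix (Fin c1) (Fin c2) (ZMod 2)) (dC1 : Matrix (Fin c0) (Fin c1) (ZMod 2))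
    (γ1 : Matrix (Fin c1) (Fin d1) (ZMod 2)) (γ0 : Matrix (Fin c0) (Fin d0) (ZMod 2))
    (hC : dC1 * dC2 = 0) (hγ0 : γ0 * dD1 = dC1 * γ1)
    (hsurj : Function.Surjective dD1.mulVec)
    -- ω-boundedness of γ₁
    (hbγ1 : ∀ x, (hammingNorm (γ1.mulVec x) : NNReal) ≤ ω * hammingNorm x)
    -- ε-systolic expansion of D₁
    (hexp : ∀ u : Fin d1 → ZMod 2, dD1.mulVec u ≠ 0 →
        ε * ((sInf {k : ℕ | ∃ z, dD1.mulVec z = 0 ∧ hammingNorm (u + z) = k} : ℕ) : NNReal) ≤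
          (hammingNorm (dD1.mulVec u) : NNReal))
    (hε : 0 < ε) (hεω : ε < ω)
    -- L' : a lift of a basis of H₁(C)/γ_*(H₁(D)) to 1-cycles of C
    (L' : Submodule (ZMod 2) (Fin c1 → ZMod 2))
    (hL'cyc : ∀ v ∈ L', dC1.mulVec v = 0)
    (hL'nt : ∀ v ∈ L', v ≠ 0 →
        ¬∃ (z : Fin d1 → ZMod 2) (b : Fin c2 → ZMod 2),
          dD1.mulVec z = 0 ∧ v = γ1.mulVec z + dC2.mulVec b)
    (hL'span : ∀ v : Fin c1 → ZMod 2, dC1.mulVec v = 0 →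
        ∃ L ∈ L', ∃ (z : Fin d1 → ZMod 2) (b : Fin c2 → ZMod 2),
          dD1.mulVec z = 0 ∧ v + L = γ1.mulVec z + dC2.mulVec b) :
    -- main inequality
    (∀ (L : Fin c1 → ZMod 2), L ∈ L' → L ≠ 0 →
      ∀ (b : Fin c2 → ZMod 2) (u : Fin d1 → ZMod 2), dD1.mulVec u ≠ 0 →
        ((ε / ω : NNReal) : ℝ≥0∞) *
            sInf ((fun v => (hammingNorm v : ℝ≥0∞)) ''
              {v : Fin c1 → ZMod 2 | dC1.mulVec v = 0 ∧
                ¬∃ x : Fin c2 → ZMod 2, dC2.mulVec x = v}) ≤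
          ((hammingNorm (dD1.mulVec u) +
            hammingNorm ((L + dC2.mulVec b) + γ1.mulVec u) : ℕ) : ℝ≥0∞)) ∧
    -- hence d_X(tot E) ≥ min(1, ε/ω) · d_X(C)
    (min 1 ((ε / ω : NNReal) : ℝ≥0∞)) *
        sInf ((fun v => (hammingNorm v : ℝ≥0∞)) ''
          {v : Fin c1 → ZMod 2 | dC1.mulVec v = 0 ∧
            ¬∃ x : Fin c2 → ZMod 2, dC2.mulVec x = v}) ≤
      sInf ((fun p => ((hammingNorm p.1 + hammingNorm p.2 : ℕ) : ℝ≥0∞)) ''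
        {p : (Fin d0 → ZMod 2) × (Fin c1 → ZMod 2) |
          γ0.mulVec p.1 + dC1.mulVec p.2 = 0 ∧
          ¬∃ (u : Fin d1 → ZMod 2) (b : Fin c2 → ZMod 2),
            p.1 = dD1.mulVec u ∧ p.2 = γ1.mulVec u + dC2.mulVec b}) := by
  set dX : ℝ≥0∞ := sInf ((fun v => (hammingNorm v : ℝ≥0∞)) ''
      {v : Fin c1 → ZMod 2 | dC1.mulVec v = 0 ∧
        ¬∃ x : Fin c2 → ZMod 2, dC2.mulVec x = v}) with hdX
  have hdC2cyc : ∀ b : Fin c2 → ZMod 2, dC1.mulVec (dC2.mulVec b) = 0 := by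
    intro b; rw [Matrix.mulVec_mulVec, hC, Matrix.zero_mulVec]
  -- Part 1
  have part1 : ∀ (L : Fin c1 → ZMod 2), L ∈ L' → L ≠ 0 →
      ∀ (b : Fin c2 → ZMod 2) (u : Fin d1 → ZMod 2), dD1.mulVec u ≠ 0 →
        ((ε / ω : NNReal) : ℝ≥0∞) * dX ≤
          ((hammingNorm (dD1.mulVec u) +
            hammingNorm ((L + dC2.mulVec b) + γ1.mulVec u) : ℕ) : ℝ≥0∞) := by
    intro L hL hL0 b u hu
    refine key_ineq d1 d0 c2 c1 c0 ε ω dD1 dC2 dC1 γ1 γ0 hγ0 hbγ1 hexp hε hεω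
      (L + dC2.mulVec b) u hu ?_ ?_
    · rw [Matrix.mulVec_add, hL'cyc L hL, hdC2cyc, add_zero]
    · intro z x hz h
      apply hL'nt L hL hL0
      refine ⟨z, b + x, hz, ?_⟩
      rw [Matrix.mulVec_add]
      ext i
      have hi := congrFun h i
      simp only [Pi.add_apply] at hi ⊢
      exact sc2 _ _ _ _ hi
  refine ⟨part1, ?_⟩
  refine le_sInf ?_
  rintro - ⟨⟨p1, p2⟩, ⟨hpcyc, hpnt⟩, rfl⟩
  simp only at hpcyc hpnt ⊢
  -- choose u with dD1 u = p1
  obtain ⟨u, hu⟩ := hsurj p1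
  -- w := p2 + γ1 u is a cycle
  have hwcyc : dC1.mulVec (p2 + γ1.mulVec u) = 0 := by
    rw [Matrix.mulVec_add, Matrix.mulVec_mulVec, ← hγ0, ← Matrix.mulVec_mulVec, hu, add_comm]
    exact hpcyc
  obtain ⟨L, hL, z, b, hz, hspan⟩ := hL'span _ hwcyc
  set u' : Fin d1 → ZMod 2 := u + z with hu'
  have hdu' : dD1.mulVec u' = p1 := by
    rw [hu', Matrix.mulVec_add, hz, add_zero, hu]
  have hp2 : p2 = L + dC2.mulVec b + γ1.mulVec u' := by
    rw [hu', Matrix.mulVec_add]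
    ext i
    have hi := congrFun hspan i
    simp only [Pi.add_apply] at hi ⊢
    exact sc3 _ _ _ _ _ hi
  by_cases hp1 : p1 = 0
  · -- boundary vanishes: p2 itself is a nontrivial cycle of C
    have hdu'0 : dD1.mulVec u' = 0 := by rw [hdu', hp1]
    have hL0 : L ≠ 0 := by
      rintro rfl
      apply hpnt
      refine ⟨u', b, by rw [hdu', hp1], ?_⟩
      rw [hp2]; abel
    have hp2cyc : dC1.mulVec p2 = 0 := by
      have h0 := hpcyc
      rw [hp1, Matrix.mulVec_zero, zero_add] at h0
      exact h0
    have hp2nt : ¬∃ x : Fin c2 → ZMod 2, dC2.mulVec x = p2 := by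
      rintro ⟨x, hx⟩
      apply hL'nt L hL hL0
      refine ⟨u', x + b, hdu'0, ?_⟩
      have hp2' : p2 = L + dC2.mulVec b + (γ1.mulVec u + γ1.mulVec z) := by
        rw [hp2, hu', Matrix.mulVec_add]
      rw [Matrix.mulVec_add, Matrix.mulVec_add]
      ext i
      have hi := congrFun hp2' i
      have hxi := congrFun hx i
      simp only [Pi.add_apply] at hi hxi ⊢
      exact sc4 _ _ _ _ _ _ hi hxi
    have hmem : (hammingNorm p2 : ℝ≥0∞) ∈ (fun v => (hammingNorm v : ℝ≥0∞)) ''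
        {v : Fin c1 → ZMod 2 | dC1.mulVec v = 0 ∧
          ¬∃ x : Fin c2 → ZMod 2, dC2.mulVec x = v} := ⟨p2, ⟨hp2cyc, hp2nt⟩, rfl⟩
    calc (min 1 ((ε / ω : NNReal) : ℝ≥0∞)) * dX ≤ 1 * dX := by gcongr; exact min_le_left _ _
      _ = dX := one_mul _
      _ ≤ (hammingNorm p2 : ℝ≥0∞) := sInf_le hmem
      _ ≤ ((hammingNorm p1 + hammingNorm p2 : ℕ) : ℝ≥0∞) := by
          push_cast
          exact le_add_self
  · -- apply the key inequality with w = L + dC2 b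
    have hu'0 : dD1.mulVec u' ≠ 0 := by rw [hdu']; exact hp1
    have hkey := key_ineq d1 d0 c2 c1 c0 ε ω dD1 dC2 dC1 γ1 γ0 hγ0 hbγ1 hexp hε hεω
      (L + dC2.mulVec b) u' hu'0
      (by rw [Matrix.mulVec_add, hL'cyc L hL, hdC2cyc, add_zero])
      ?_
    · calc (min 1 ((ε / ω : NNReal) : ℝ≥0∞)) * dX ≤ ((ε / ω : NNReal) : ℝ≥0∞) * dX := by
            gcongr; exact min_le_right _ _
        _ ≤ ((hammingNorm (dD1.mulVec u') +
              hammingNorm ((L + dC2.mulVec b) + γ1.mulVec u') : ℕ) : ℝ≥0∞) := hkey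
        _ = ((hammingNorm p1 + hammingNorm p2 : ℕ) : ℝ≥0∞) := by
            rw [hdu', ← hp2]
    · -- nontriviality of L + dC2 b + γ1 z₀
      intro z₀ x hz₀ h
      by_cases hL0 : L = 0
      · -- contradicts nontriviality of p
        apply hpnt
        refine ⟨u' + z₀, x, ?_, ?_⟩
        · rw [Matrix.mulVec_add, hz₀, add_zero, hdu']
        · rw [hL0, zero_add] at h
          -- h : dC2 b + γ1 z₀ = dC2 x
          rw [hp2, hL0, Matrix.mulVec_add _ u' z₀]
          ext i
          have hi := congrFun h i
          simp only [Pi.add_apply, Pi.zero_apply] at hi ⊢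
          exact sc5 _ _ _ _ hi
      · apply hL'nt L hL hL0
        refine ⟨z₀, b + x, hz₀, ?_⟩
        rw [Matrix.mulVec_add]
        ext i
        have hi := congrFun h i
        simp only [Pi.add_apply] at hi ⊢
        exact sc2 _ _ _ _ hi
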